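/- Let f : ℝ → ℝ be N times continuously differentiable with bounded N-th derivative, and let φ be compactly supported on [0,3N−1], bounded, and reproduce polynomials of degree ≤ N−1 via shifted samples as in the operator P̃^m f(x) = ∑_k f((M₁+k)/2^m) φ(2^m x − k). Then there is a constant C depending only on φ, N and ‖f^{(N)}‖_∞ such that |f(x) − P̃^m f(x)| ≤ C · 2^{−mN} for all x ∈ ℝ. -/

import Mathlib

open Polynomial

lemma aux_iterWithin {N : ℕ} (f : ℝ → ℝ) (hf : ContDiff ℝ (N : ℕ∞) f) {s : Set ℝ}
    (hs : UniqueDiffOn ℝ s) {x : ℝ} (hx : x ∈ s) {i : ℕ} (hi : i ≤ N) :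
    iteratedDerivWithin i f s x = iteratedDeriv i f x := by
  have H := contDiff_iff_ftaylorSeries.mp hf
  have H2 := (hasFTaylorSeriesUpToOn_univ_iff.mpr H).mono (Set.subset_univ s)
  have h : iteratedFDerivWithin ℝ i f s x = iteratedFDeriv ℝ i f x :=
    (H2.eq_iteratedFDerivWithin_of_uniqueDiffOn (by exact_mod_cast hi) hs hx).symm
  rw [iteratedDerivWithin_eq_iteratedFDerivWithin, iteratedDeriv_eq_iteratedFDeriv, h]

lemma taylor_half {n : ℕ} {f : ℝ → ℝ} (hf : ContDiff ℝ ((n + 1 : ℕ) : ℕ∞) f) {K : ℝ}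
    (hfK : ∀ t : ℝ, |iteratedDeriv (n + 1) f t| ≤ K) {x y : ℝ} (hxy : x ≤ y) :
    |f y - ∑ i ∈ Finset.range (n + 1), iteratedDeriv i f x / i.factorial * (y - x) ^ i|
      ≤ K * (y - x) ^ (n + 1) / n.factorial := by
  rcases eq_or_lt_of_le hxy with rfl | h
  · have hsum : ∑ i ∈ Finset.range (n + 1), iteratedDeriv i f x / i.factorial * (x - x) ^ i = f x := by
      rw [Finset.sum_eq_single_of_mem 0 (Finset.mem_range.mpr (Nat.succ_pos n))]
      · simp
      · intro i _ hi; simp [sub_self, zero_pow hi]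
    rw [hsum, sub_self, abs_zero, sub_self]
    simp
  · have hs := uniqueDiffOn_Icc h
    have hf' : ContDiffOn ℝ (n + 1) f (Set.Icc x y) := by
      exact_mod_cast hf.contDiffOn
    have hC : ∀ t ∈ Set.Icc x y, ‖iteratedDerivWithin (n + 1) f (Set.Icc x y) t‖ ≤ K := by
      intro t ht
      rw [Real.norm_eq_abs, aux_iterWithin f hf hs ht le_rfl]
      exact hfK t
    have hb := taylor_mean_remainder_bound hxy hf' (Set.right_mem_Icc.mpr hxy) hC
    rw [taylor_within_apply, Real.norm_eq_abs] at hb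
    have hsum : ∑ k ∈ Finset.range (n + 1),
        ((k.factorial : ℝ)⁻¹ * (y - x) ^ k) • iteratedDerivWithin k f (Set.Icc x y) x
        = ∑ i ∈ Finset.range (n + 1), iteratedDeriv i f x / i.factorial * (y - x) ^ i := by
      refine Finset.sum_congr rfl fun i hi => ?_
      rw [aux_iterWithin f hf hs (Set.left_mem_Icc.mpr hxy)
        (Nat.le_of_lt_succ (Finset.mem_range.mp hi) |>.trans (Nat.le_succ n))]
      rw [smul_eq_mul]; ring
    rw [hsum] at hb
    exact hb

lemma taylor_full {n : ℕ} {f : ℝ → ℝ} (hf : ContDiff ℝ ((n + 1 : ℕ) : ℕ∞) f) {K : ℝ}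
    (hfK : ∀ t : ℝ, |iteratedDeriv (n + 1) f t| ≤ K) (x y : ℝ) :
    |f y - ∑ i ∈ Finset.range (n + 1), iteratedDeriv i f x / i.factorial * (y - x) ^ i|
      ≤ K * |y - x| ^ (n + 1) / n.factorial := by
  rcases le_total x y with hxy | hxy
  · rw [abs_of_nonneg (sub_nonneg.mpr hxy)]
    exact taylor_half hf hfK hxy
  · have hgC : ContDiff ℝ ((n + 1 : ℕ) : ℕ∞) (fun t => f (-t)) := hf.comp contDiff_neg
    have hgK : ∀ t : ℝ, |iteratedDeriv (n + 1) (fun t => f (-t)) t| ≤ K := by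
      intro t
      rw [iteratedDeriv_comp_neg, smul_eq_mul, abs_mul, abs_pow, abs_neg, abs_one,
        one_pow, one_mul]
      exact hfK (-t)
    have h2 := taylor_half hgC hgK (x := -x) (y := -y) (neg_le_neg hxy)
    have hgy : f (-(-y)) = f y := by rw [neg_neg]
    have hsum : ∑ i ∈ Finset.range (n + 1),
        iteratedDeriv i (fun t => f (-t)) (-x) / i.factorial * (-y - -x) ^ i
        = ∑ i ∈ Finset.range (n + 1), iteratedDeriv i f x / i.factorial * (y - x) ^ i := by
      refine Finset.sum_congr rfl fun i _ => ?_
      have key2 : ((-1 : ℝ)) ^ i * (-y - -x) ^ i = (y - x) ^ i := by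
        rw [← mul_pow]; congr 1; ring
      rw [iteratedDeriv_comp_neg, neg_neg, smul_eq_mul,
        show ((-1 : ℝ) ^ i * iteratedDeriv i f x) / i.factorial * (-y - -x) ^ i
          = iteratedDeriv i f x / i.factorial * ((-1 : ℝ) ^ i * (-y - -x) ^ i) by ring,
        key2]
    rw [hgy, hsum] at h2
    rw [abs_sub_comm y x, abs_of_nonneg (sub_nonneg.mpr hxy)]
    calc |f y - ∑ i ∈ Finset.range (n + 1), iteratedDeriv i f x / i.factorial * (y - x) ^ i|
        ≤ K * (-y - -x) ^ (n + 1) / n.factorial := h2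
      _ = K * (x - y) ^ (n + 1) / n.factorial := by ring_nf


/-- N-th order error estimate: if `f ∈ Cᴺ` with bounded `N`-th derivative, and
the bounded, compactly supported `φ` reproduces polynomials of degree `≤ N−1`
through shifted samples, then `|f(x) − P̃^m f(x)| ≤ C·2^{−mN}` uniformly in `x`
and `m`, with `C` independent of `m`. -/
theorem wavelet_approximation_error_bound
    (N : ℕ) (hN : 0 < N) (M₁ : ℤ) (φ : ℝ → ℝ) (K B : ℝ)
    (f : ℝ → ℝ) (hf : ContDiff ℝ N f)
    (hfK : ∀ x : ℝ, |iteratedDeriv N f x| ≤ K)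
    (hφb : ∀ x : ℝ, |φ x| ≤ B)
    (hsupp : ∀ x : ℝ, x < 0 ∨ (3 * N : ℝ) - 1 < x → φ x = 0)
    (hrep : ∀ P : Polynomial ℝ, P.natDegree ≤ N - 1 → ∀ m : ℕ, ∀ x : ℝ,
      ∑' k : ℤ, P.eval (((M₁ : ℝ) + k) / 2 ^ m) * φ (2 ^ m * x - k)
        = P.eval x) :
    ∃ C : ℝ, ∀ m : ℕ, ∀ x : ℝ,
      |f x - ∑' k : ℤ, f (((M₁ : ℝ) + k) / 2 ^ m) * φ (2 ^ m * x - k)|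
        ≤ C * 2 ^ (-(m : ℝ) * N) := by
  obtain ⟨n, rfl⟩ : ∃ n, N = n + 1 := ⟨N - 1, (Nat.succ_pred_eq_of_pos hN).symm⟩
  have hf' : ContDiff ℝ ((n + 1 : ℕ) : ℕ∞) f := by exact_mod_cast hf
  have hK0 : 0 ≤ K := (abs_nonneg _).trans (hfK 0)
  have hB0 : 0 ≤ B := (abs_nonneg _).trans (hφb 0)
  set A : ℝ := |(M₁ : ℝ)| + 3 * (n + 1) with hA
  have hA0 : 0 ≤ A := by positivity
  refine ⟨(3 * (n + 1) + 1 : ℝ) * (K * A ^ (n + 1) / n.factorial * B), fun m x => ?_⟩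
  have h2m : (0:ℝ) < 2 ^ m := by positivity
  set t : ℝ := 2 ^ m * x with ht
  set c : ℝ := 3 * ((n : ℝ) + 1) - 1 with hc
  have hc0 : 0 ≤ c := by rw [hc]; linarith
  set S : Finset ℤ := Finset.Icc ⌈t - c⌉ ⌊t⌋ with hS
  -- support of the summands
  have hzero : ∀ k : ℤ, k ∉ S → φ (t - k) = 0 := by
    intro k hk
    rw [hS, Finset.mem_Icc, not_and_or] at hk
    rcases hk with hk | hk
    · have h1 : (k : ℝ) < t - c := by
        by_contra hcon; push_neg at hcon
        exact hk (Int.ceil_le.mpr hcon)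
      refine hsupp _ (Or.inr ?_)
      push_cast
      rw [hc] at h1; push_cast at h1; linarith
    · have h1 : t < (k : ℝ) := by
        rw [not_le] at hk; exact Int.floor_lt.mp hk
      exact hsupp _ (Or.inl (by linarith))
  -- the Taylor polynomial
  set P : Polynomial ℝ :=
    ∑ i ∈ Finset.range (n + 1), Polynomial.C (iteratedDeriv i f x / i.factorial) * (X - Polynomial.C x) ^ i with hP
  have hPeval : ∀ z : ℝ,
      P.eval z = ∑ i ∈ Finset.range (n + 1), iteratedDeriv i f x / i.factorial * (z - x) ^ i := by
    intro z
    rw [hP, eval_finset_sum]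
    exact Finset.sum_congr rfl fun i _ => by simp
  have hPdeg : P.natDegree ≤ (n + 1) - 1 := by
    rw [hP]
    refine Polynomial.natDegree_sum_le_of_forall_le _ _ fun i hi => ?_
    refine (Polynomial.natDegree_C_mul_le _ _).trans ?_
    rw [Polynomial.natDegree_pow, Polynomial.natDegree_X_sub_C, mul_one]
    simpa using Nat.le_of_lt_succ (Finset.mem_range.mp hi)
  have hPx : P.eval x = f x := by
    rw [hPeval, Finset.sum_eq_single_of_mem 0 (Finset.mem_range.mpr (Nat.succ_pos n))]
    · simp
    · intro i _ hi; simp [sub_self, zero_pow hi]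
  have hrepP := hrep P hPdeg m x
  rw [← ht] at hrepP
  -- tsums are finite sums over S
  have hz1 : ∀ k : ℤ, k ∉ S → f (((M₁ : ℝ) + k) / 2 ^ m) * φ (t - k) = 0 :=
    fun k hk => by rw [hzero k hk, mul_zero]
  have hz2 : ∀ k : ℤ, k ∉ S → P.eval (((M₁ : ℝ) + k) / 2 ^ m) * φ (t - k) = 0 :=
    fun k hk => by rw [hzero k hk, mul_zero]
  have hT1 : ∑' k : ℤ, f (((M₁ : ℝ) + k) / 2 ^ m) * φ (t - k)
      = ∑ k ∈ S, f (((M₁ : ℝ) + k) / 2 ^ m) * φ (t - k) := tsum_eq_sum hz1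
  have hfx : f x = ∑ k ∈ S, P.eval (((M₁ : ℝ) + k) / 2 ^ m) * φ (t - k) := by
    rw [← tsum_eq_sum (L := SummationFilter.unconditional ℤ) hz2, hrepP, hPx]
  rw [hT1, hfx, ← Finset.sum_sub_distrib]
  refine (Finset.abs_sum_le_sum_abs _ _).trans ?_
  -- per-term bound
  have hterm : ∀ k ∈ S,
      |P.eval (((M₁ : ℝ) + k) / 2 ^ m) * φ (t - k)
        - f (((M₁ : ℝ) + k) / 2 ^ m) * φ (t - k)|
      ≤ K * (A / 2 ^ m) ^ (n + 1) / n.factorial * B := by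
    intro k hk
    rw [hS, Finset.mem_Icc] at hk
    have hkl : t - c ≤ (k : ℝ) := le_trans (Int.le_ceil _) (by exact_mod_cast hk.1)
    have hku : (k : ℝ) ≤ t := le_trans (by exact_mod_cast hk.2) (Int.floor_le t)
    set y : ℝ := ((M₁ : ℝ) + k) / 2 ^ m with hy
    have hyx : |y - x| ≤ A / 2 ^ m := by
      have hyx' : y - x = ((M₁ : ℝ) + k - t) / 2 ^ m := by
        rw [hy, ht]; field_simp
      rw [hyx', abs_div, abs_of_pos h2m]
      gcongr
      calc |(M₁ : ℝ) + k - t| ≤ |(M₁ : ℝ)| + |(k : ℝ) - t| := by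
            rw [add_sub_assoc]; exact abs_add_le _ _
        _ ≤ |(M₁ : ℝ)| + c := by
            have : |(k : ℝ) - t| ≤ c := abs_le.mpr ⟨by linarith, by linarith⟩
            linarith
        _ ≤ A := by rw [hA, hc]; push_cast; linarith
    have htay : |P.eval y - f y| ≤ K * (A / 2 ^ m) ^ (n + 1) / n.factorial := by
      rw [hPeval, abs_sub_comm]
      refine (taylor_full hf' hfK x y).trans ?_
      gcongr
    rw [← sub_mul, abs_mul]
    exact mul_le_mul htay (hφb _) (abs_nonneg _)
      (div_nonneg (mul_nonneg hK0 (by positivity)) (by positivity))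
  refine (Finset.sum_le_sum hterm).trans ?_
  rw [Finset.sum_const, nsmul_eq_mul]
  -- card bound
  have hcard : (S.card : ℝ) ≤ 3 * (n + 1) + 1 := by
    have h1 : S.card ≤ 3 * (n + 1) + 1 := by
      rw [hS, Int.card_Icc]
      refine Int.toNat_le.mpr ?_
      have h2 : ((⌊t⌋ : ℝ)) - ⌈t - c⌉ ≤ 3 * (n + 1) := by
        have := Int.floor_le t
        have := Int.le_ceil (t - c)
        rw [hc]; push_cast; linarith
      have h3 : (⌊t⌋ : ℤ) - ⌈t - c⌉ ≤ 3 * (n + 1) := by exact_mod_cast h2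
      push_cast
      linarith
    exact_mod_cast h1
  -- rpow identity
  have hR : (2 : ℝ) ^ (-(m : ℝ) * ((n : ℝ) + 1)) = (((2 : ℝ) ^ m) ^ (n + 1))⁻¹ := by
    rw [show (-(m : ℝ) * ((n : ℝ) + 1)) = -((m * (n + 1) : ℕ) : ℝ) by push_cast; ring,
      Real.rpow_neg (by norm_num), Real.rpow_natCast, pow_mul]
  have hE : K * (A / 2 ^ m) ^ (n + 1) / n.factorial * B
      = K * A ^ (n + 1) / n.factorial * B * (2 : ℝ) ^ (-(m : ℝ) * ((n : ℝ) + 1)) := by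
    rw [hR, div_pow]; ring
  have hRpos : (0 : ℝ) < (2 : ℝ) ^ (-(m : ℝ) * ((n : ℝ) + 1)) :=
    Real.rpow_pos_of_pos (by norm_num) _
  have hEB : 0 ≤ K * (A / 2 ^ m) ^ (n + 1) / n.factorial * B := by positivity
  calc (S.card : ℝ) * (K * (A / 2 ^ m) ^ (n + 1) / n.factorial * B)
      ≤ (3 * (n + 1) + 1) * (K * (A / 2 ^ m) ^ (n + 1) / n.factorial * B) :=
        mul_le_mul_of_nonneg_right hcard hEB
    _ = (3 * (n + 1) + 1 : ℝ) * (K * A ^ (n + 1) / n.factorial * B)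
        * (2 : ℝ) ^ (-(m : ℝ) * ((n : ℝ) + 1)) := by rw [hE]; ring
    _ = _ := by push_cast; ring_nf
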